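/- Let X be a uniformly discrete metric space with bounded geometry such that κ_X(R) > 1 for some R > 0; that is, for some R > 0 there exists no pair (T_R, Σ_R) of a finite set of pairwise disjoint partial translations covering {(x,y) : d(x,y) < R} together with partial cotranslations satisfying the atlas axioms with k = 1. Then X does not admit an injective uniform embedding into any countable discrete group equipped with a proper left-invariant metric. -/
import Mathlib


open Metric

def UniformlyDiscrete (X : Type*) [MetricSpace X] : Prop :=
  ∃ δ > (0:ℝ), ∀ x y : X, x ≠ y → δ ≤ dist x y

def BoundedGeometry (X : Type*) [MetricSpace X] : Prop :=
  ∀ R > (0:ℝ), ∃ N : ℕ, ∀ x : X,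
    (closedBall x R).Finite ∧ (closedBall x R).ncard ≤ N

def IsUniformEmbeddingMap {X Y : Type*} [MetricSpace X] [MetricSpace Y]
    (f : X → Y) : Prop :=
  (∀ R > (0:ℝ), ∃ S > (0:ℝ), ∀ x y : X, dist x y ≤ R → dist (f x) (f y) ≤ S) ∧
  (∀ R > (0:ℝ), ∃ S > (0:ℝ), ∀ x y : X, dist (f x) (f y) ≤ R → dist x y ≤ S)

/-- A partial bijection of `X`: a subset of `X × X` both of whose coordinate
projections are injective. -/
def IsPartialBijection {X : Type*} (t : Set (X × X)) : Prop :=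
  ∀ p ∈ t, ∀ q ∈ t, (p.1 = q.1 → p = q) ∧ (p.2 = q.2 → p = q)

/-- A partial translation of `X`: a partial bijection moving points a uniformly
bounded distance. -/
def IsPartialTranslation {X : Type*} [MetricSpace X] (t : Set (X × X)) : Prop :=
  IsPartialBijection t ∧ ∃ B : ℝ, ∀ p ∈ t, dist p.1 p.2 ≤ B

/-- `σ` is a partial cotranslation for the family `T` of partial translations:
`σ` is a partial bijection, and whenever `(x,y) ∈ t ∈ T` and `σ` is defined at
both `x` and `y`, then `(σ x, σ y) ∈ t`.  Here `(x, x') ∈ σ` means `σ x = x'`. -/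
def IsPartialCotranslationFor {X : Type*} [MetricSpace X]
    (T : Set (Set (X × X))) (σ : Set (X × X)) : Prop :=
  IsPartialBijection σ ∧
    ∀ t ∈ T, ∀ x y x' y' : X, (x, y) ∈ t → (x, x') ∈ σ → (y, y') ∈ σ → (x', y') ∈ t

/-- `(T, Sig)` is an atlas chart at scale `R` with multiplicity bound `k`:
`T` is a finite set of pairwise disjoint partial translations whose union
contains the `R`-neighbourhood of the diagonal, `Sig` is a set of partial
cotranslations for `T`, at most `k` elements of `Sig` send `x` to `x'` for any
`x, x'`, and the elements of `Sig` act transitively on each `t ∈ T`. -/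
def IsAtlasAt {X : Type*} [MetricSpace X] (R : ℝ) (k : ℕ)
    (T : Set (Set (X × X))) (Sig : Set (Set (X × X))) : Prop :=
  T.Finite ∧
  (∀ t ∈ T, IsPartialTranslation t) ∧
  T.Pairwise Disjoint ∧
  (∀ x y : X, dist x y < R → ∃ t ∈ T, (x, y) ∈ t) ∧
  (∀ σ ∈ Sig, IsPartialCotranslationFor T σ) ∧
  (∀ x x' : X, {σ ∈ Sig | (x, x') ∈ σ}.Finite ∧ {σ ∈ Sig | (x, x') ∈ σ}.ncard ≤ k) ∧
  (∀ t ∈ T, ∀ x y x' y' : X, (x, y) ∈ t → (x', y') ∈ t →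
    ∃ σ ∈ Sig, (x, x') ∈ σ ∧ (y, y') ∈ σ)

/-- The cotranslation orbit of the pair `(x, y)` under `Sig`. -/
def cotranslationOrbit {X : Type*} (Sig : Set (Set (X × X))) (x y : X) :
    Set (X × X) :=
  {p : X × X | ∃ σ ∈ Sig, (x, p.1) ∈ σ ∧ (y, p.2) ∈ σ}

/-- An atlas chart is globally controlled if every cotranslation orbit is a
partial translation. -/
def IsGloballyControlledAt {X : Type*} [MetricSpace X]
    (Sig : Set (Set (X × X))) : Prop :=
  ∀ x y : X, IsPartialTranslation (cotranslationOrbit Sig x y)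

theorem stmt12 (X : Type) [MetricSpace X]
    (hud : UniformlyDiscrete X) (hbg : BoundedGeometry X)
    (h : ∃ R > (0:ℝ), ¬ ∃ T Sig : Set (Set (X × X)), IsAtlasAt R 1 T Sig) :
    ∀ (G : Type) [Group G] [Countable G] [MetricSpace G],
      (∀ g x y : G, dist (g * x) (g * y) = dist x y) →
      (∀ (x : G) (r : ℝ), (closedBall x r).Finite) →
      ∀ φ : X → G, Function.Injective φ → ¬ IsUniformEmbeddingMap φ := by
  obtain ⟨R, hR, hno⟩ := h
  intro G _ _ _ hinv hfin φ hφ hUE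
  apply hno
  obtain ⟨hf, hb⟩ := hUE
  obtain ⟨S, hS, hSf⟩ := hf R hR
  refine ⟨(fun g : G => {p : X × X | (φ p.1)⁻¹ * φ p.2 = g}) '' (closedBall (1:G) S),
    Set.range (fun h : G => {p : X × X | φ p.2 = h * φ p.1}), ?_, ?_, ?_, ?_, ?_, ?_, ?_⟩
  · exact (hfin 1 S).image _
  · rintro t ⟨g, hg, rfl⟩
    constructor
    · intro p hp q hq
      simp only [Set.mem_setOf_eq] at hp hq
      constructor
      · intro h1
        have h2 : φ p.2 = φ q.2 := by
          have := hp.trans hq.symm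
          rw [h1] at this
          exact mul_left_cancel this
        exact Prod.ext h1 (hφ h2)
      · intro h2
        have h1 : φ p.1 = φ q.1 := by
          have := hp.trans hq.symm
          rw [h2] at this
          exact inv_injective (mul_right_cancel this)
        exact Prod.ext (hφ h1) h2
    · obtain ⟨B, hB, hBf⟩ := hb (dist (1:G) g + 1) (by positivity)
      refine ⟨B, fun p hp => ?_⟩
      simp only [Set.mem_setOf_eq] at hp
      have h1 : φ p.2 = φ p.1 * g := by
        rw [← hp, mul_inv_cancel_left]
      have h2 : dist (φ p.1) (φ p.2) = dist (1:G) g := by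
        rw [h1]
        simpa using hinv (φ p.1) 1 g
      exact hBf _ _ (by rw [h2]; linarith)
  · rintro a ⟨g, -, rfl⟩ b ⟨g', -, rfl⟩ hne
    rw [Set.disjoint_left]
    intro p hp hp'
    simp only [Set.mem_setOf_eq] at hp hp'
    exact hne (by rw [← hp, ← hp'])
  · intro x y hxy
    refine ⟨_, ⟨(φ x)⁻¹ * φ y, ?_, rfl⟩, rfl⟩
    rw [mem_closedBall, dist_comm]
    have := hinv (φ x) 1 ((φ x)⁻¹ * φ y)
    simp only [mul_one, mul_inv_cancel_left] at this
    rw [← this]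
    exact hSf x y hxy.le
  · rintro s ⟨h, rfl⟩
    constructor
    · intro p hp q hq
      simp only [Set.mem_setOf_eq] at hp hq
      constructor
      · intro h1
        have : φ p.2 = φ q.2 := by rw [hp, hq, h1]
        exact Prod.ext h1 (hφ this)
      · intro h2
        have : φ p.1 = φ q.1 := by
          have h3 : h * φ p.1 = h * φ q.1 := by rw [← hp, ← hq, h2]
          exact mul_left_cancel h3
        exact Prod.ext (hφ this) h2
    · rintro t ⟨g, -, rfl⟩ x y x' y' hxy hx hy
      simp only [Set.mem_setOf_eq] at hxy hx hy ⊢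
      rw [hx, hy, mul_inv_rev, mul_assoc, inv_mul_cancel_left, hxy]
  · intro x x'
    have hsub : {σ ∈ Set.range (fun h : G => {p : X × X | φ p.2 = h * φ p.1}) |
        (x, x') ∈ σ} ⊆ {{p : X × X | φ p.2 = φ x' * (φ x)⁻¹ * φ p.1}} := by
      rintro s ⟨⟨h, rfl⟩, hmem⟩
      simp only [Set.mem_setOf_eq] at hmem
      have : h = φ x' * (φ x)⁻¹ := by
        rw [hmem]; group
      rw [Set.mem_singleton_iff, this]
    constructor
    · exact (Set.finite_singleton _).subset hsub
    · calc _ ≤ ({{p : X × X | φ p.2 = φ x' * (φ x)⁻¹ * φ p.1}} : Set (Set (X × X))).ncard :=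
            Set.ncard_le_ncard hsub (Set.finite_singleton _)
        _ = 1 := Set.ncard_singleton _
  · rintro t ⟨g, -, rfl⟩ x y x' y' hxy hx'y'
    simp only [Set.mem_setOf_eq] at hxy hx'y'
    refine ⟨_, ⟨φ x' * (φ x)⁻¹, rfl⟩, ?_, ?_⟩
    · simp [mul_assoc]
    · simp only [Set.mem_setOf_eq]
      have h1 : φ y = φ x * g := by rw [← hxy, mul_inv_cancel_left]
      have h2 : φ y' = φ x' * g := by rw [← hx'y', mul_inv_cancel_left]
      rw [h1, h2]; group
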